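/- Suppose z ∈ k[X] satisfies z(X+1) − z(X) = c(X). Then the Casimir element Δ = ef + z(h) of A commutes with each of h, e, and f; in particular Δ is central in the subalgebra of A generated by h, e, f. -/

import Mathlib

open Polynomial

lemma aux_shift {k A : Type*} [CommSemiring k] [Ring A] [Algebra k A] (h x y : A)
    (hx : h * x = x * y) (p : Polynomial k) :
    Polynomial.aeval h p * x = x * Polynomial.aeval y p := by
  have hpow : ∀ n : ℕ, h ^ n * x = x * y ^ n := by
    intro n; induction n with
    | zero => simp
    | succ m ih => rw [pow_succ, pow_succ, mul_assoc, hx, ← mul_assoc, ih, mul_assoc]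
  induction p using Polynomial.induction_on' with
  | add p q hp hq => simp [add_mul, mul_add, hp, hq]
  | monomial n a =>
    simp only [Polynomial.aeval_monomial]
    rw [mul_assoc, hpow, ← mul_assoc, Algebra.commutes, mul_assoc]

/-- Let `k` be a field, `c ∈ k[X]`, and `A` an associative unital
`k`-algebra containing `h, e, f` with `he - eh = e`, `hf - fh = -f`, `ef - fe = c(h)`.
If `z ∈ k[X]` satisfies `z(X+1) - z(X) = c(X)`, then the Casimir element
`Δ = ef + z(h)` commutes with each of `h`, `e` and `f`. -/
theorem stmt_16 {k : Type*} [Field k] (c z : Polynomial k)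
    (hz : z.comp (Polynomial.X + 1) - z = c)
    {A : Type*} [Ring A] [Algebra k A] (h e f : A)
    (rel1 : h * e - e * h = e) (rel2 : h * f - f * h = -f)
    (rel3 : e * f - f * e = Polynomial.aeval h c) :
    Commute (e * f + Polynomial.aeval h z) h ∧
    Commute (e * f + Polynomial.aeval h z) e ∧
    Commute (e * f + Polynomial.aeval h z) f := by
  have he : h * e = e * (h + 1) := by
    rw [mul_add, mul_one]; exact eq_add_of_sub_eq' rel1
  have hf : h * f = f * (h - 1) := by
    rw [mul_sub, mul_one, eq_add_of_sub_eq' rel2]; abel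
  have hfe : f * e = e * f - Polynomial.aeval h c :=
    eq_sub_of_add_eq (eq_add_of_sub_eq' rel3).symm
  have ze : Polynomial.aeval h z * e = e * Polynomial.aeval (h + 1) z :=
    aux_shift h e (h + 1) he z
  have zf : Polynomial.aeval h z * f = f * Polynomial.aeval (h - 1) z :=
    aux_shift h f (h - 1) hf z
  have cf : Polynomial.aeval h c * f = f * Polynomial.aeval (h - 1) c :=
    aux_shift h f (h - 1) hf c
  have zh : Polynomial.aeval h z * h = h * Polynomial.aeval h z :=
    aux_shift h h h rfl z
  have ev1 : Polynomial.aeval (h + 1) z = Polynomial.aeval h z + Polynomial.aeval h c := by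
    have := congrArg (Polynomial.aeval h) hz
    simp only [map_sub, Polynomial.aeval_comp, map_add, Polynomial.aeval_X, map_one] at this
    exact eq_add_of_sub_eq' this
  have ev2 : Polynomial.aeval h z = Polynomial.aeval (h - 1) z + Polynomial.aeval (h - 1) c := by
    have := congrArg (Polynomial.aeval (h - 1)) hz
    simp only [map_sub, Polynomial.aeval_comp, map_add, Polynomial.aeval_X, map_one,
      sub_add_cancel] at this
    exact eq_add_of_sub_eq' this
  refine ⟨?_, ?_, ?_⟩
  · -- with h
    show _ * h = h * _
    have key : h * (e * f) = e * f * h := by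
      calc h * (e * f) = (e * (h + 1)) * f := by rw [← mul_assoc, he]
        _ = e * (h * f) + e * f := by noncomm_ring
        _ = e * (f * (h - 1)) + e * f := by rw [hf]
        _ = e * f * h := by noncomm_ring
    rw [add_mul, mul_add, key, zh]
  · -- with e
    show _ * e = e * _
    calc (e * f + Polynomial.aeval h z) * e
        = e * (f * e) + Polynomial.aeval h z * e := by noncomm_ring
      _ = e * (e * f - Polynomial.aeval h c) +
          e * (Polynomial.aeval h z + Polynomial.aeval h c) := by rw [hfe, ze, ev1]
      _ = e * (e * f + Polynomial.aeval h z) := by noncomm_ring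
  · -- with f
    show _ * f = f * _
    calc (e * f + Polynomial.aeval h z) * f
        = e * f * f + Polynomial.aeval h z * f := by noncomm_ring
      _ = e * f * f + f * Polynomial.aeval (h - 1) z := by rw [zf]
      _ = (e * f - Polynomial.aeval h c) * f + f *
          (Polynomial.aeval (h - 1) z + Polynomial.aeval (h - 1) c) := by
          rw [mul_add, sub_mul, cf]; noncomm_ring
      _ = f * (e * f + Polynomial.aeval h z) := by rw [← hfe, ← ev2]; noncomm_ring
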